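/- Let t₁,…,tₙ be elements of a finitely generated free abelian group F. Then {t₁,…,tₙ} fails to extend to a total group order of F if and only if the identity e lies in the subsemigroup of F generated by {t₁,…,tₙ}. -/

import Mathlib

section aux

variable {F : Type*} [AddCommGroup F]

/-- torsion-freeness of the free abelian group -/
lemma freeAb_torsionfree {k : ℕ} (m : ℕ) (x : FreeAbelianGroup (Fin k))
    (h : m • x = 0) : m = 0 ∨ x = 0 := by
  have e := FreeAbelianGroup.equivFinsupp (Fin k)
  have h2 : (e : FreeAbelianGroup (Fin k) →+ (Fin k →₀ ℤ)) (m • x) = 0 := by rw [h]; simp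
  rw [map_nsmul] at h2
  rcases smul_eq_zero.mp h2 with h1 | h2
  · exact Or.inl h1
  · exact Or.inr (e.injective (by simpa using h2))

lemma nsmul_mem_set {A : Set F} (hA : ∀ x ∈ A, ∀ y ∈ A, x + y ∈ A) {x : F}
    (hx : x ∈ A) : ∀ n : ℕ, 1 ≤ n → n • x ∈ A := by
  intro n hn
  induction n with
  | zero => omega
  | succ m ih =>
    rcases Nat.eq_or_lt_of_le hn with h | h
    · obtain rfl : m = 0 := by omega
      simpa using hx
    · have hm : 1 ≤ m := by omega
      have := hA _ (ih hm) _ hx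
      simpa [succ_nsmul] using this

lemma form_lemma {A : Set F} (hA : ∀ x ∈ A, ∀ y ∈ A, x + y ∈ A) (g : F) :
    ∀ x ∈ AddSubsemigroup.closure (insert g A),
      ∃ (p : F) (m : ℕ), x = p + m • g ∧ (p ∈ A ∨ (p = 0 ∧ 1 ≤ m)) := by
  intro x hx
  induction hx using AddSubsemigroup.closure_induction with
  | mem z hz =>
    rcases hz with rfl | hz
    · exact ⟨0, 1, by simp, Or.inr ⟨rfl, le_refl 1⟩⟩
    · exact ⟨z, 0, by simp, Or.inl hz⟩
  | add x y hx hy ihx ihy =>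
    obtain ⟨p, m, rfl, hp⟩ := ihx
    obtain ⟨q, l, rfl, hq⟩ := ihy
    refine ⟨p + q, m + l, by rw [add_nsmul]; abel, ?_⟩
    rcases hp with hp | ⟨rfl, hm⟩
    · rcases hq with hq | ⟨rfl, hl⟩
      · exact Or.inl (hA _ hp _ hq)
      · exact Or.inl (by simpa using hp)
    · rcases hq with hq | ⟨rfl, hl⟩
      · exact Or.inl (by simpa using hq)
      · exact Or.inr ⟨by simp, by omega⟩

end aux

theorem not_extends_order_iff_zero_mem_closure (k n : ℕ)
    (t : Fin n → FreeAbelianGroup (Fin k)) :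
    ¬ (∃ r : FreeAbelianGroup (Fin k) → FreeAbelianGroup (Fin k) → Prop,
        IsLinearOrder _ r ∧
        (∀ a b c, r a b → r (a + c) (b + c)) ∧
        (∀ i, r 0 (t i) ∧ t i ≠ 0)) ↔
      (0 : FreeAbelianGroup (Fin k)) ∈ AddSubsemigroup.closure (Set.range t) := by
  constructor
  · -- hard direction: no 0 in closure → construct order; contrapositive
    intro hno
    by_contra h0
    apply hno
    -- Zorn on add-closed sets containing range t and avoiding 0
    set 𝒮 : Set (Set (FreeAbelianGroup (Fin k))) :=
      {A | (∀ x ∈ A, ∀ y ∈ A, x + y ∈ A) ∧ Set.range t ⊆ A ∧ (0 : FreeAbelianGroup (Fin k)) ∉ A} with h𝒮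
    have hx0 : (↑(AddSubsemigroup.closure (Set.range t)) : Set (FreeAbelianGroup (Fin k))) ∈ 𝒮 := by
      refine ⟨fun x hx y hy => AddSubsemigroup.add_mem _ hx hy,
        AddSubsemigroup.subset_closure, by simpa using h0⟩
    obtain ⟨m, hsub, hmax⟩ := zorn_subset_nonempty 𝒮 (fun c hc hchain ⟨A, hA⟩ => by
      refine ⟨⋃₀ c, ⟨?_, ?_, ?_⟩, fun s hs => Set.subset_sUnion_of_mem hs⟩
      · rintro x ⟨B, hB, hxB⟩ y ⟨C, hC, hyC⟩
        rcases hchain.total hB hC with h | h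
        · exact ⟨C, hC, (hc hC).1 _ (h hxB) _ hyC⟩
        · exact ⟨B, hB, (hc hB).1 _ hxB _ (h hyC)⟩
      · exact (hc hA).2.1.trans (Set.subset_sUnion_of_mem hA)
      · rintro ⟨B, hB, h0B⟩
        exact (hc hB).2.2 h0B) _ hx0
    obtain ⟨hmadd, hmt, hm0⟩ := hmax.prop
    -- key: maximality gives totality
    have hkey : ∀ g : FreeAbelianGroup (Fin k), g ≠ 0 → g ∈ m ∨ -g ∈ m := by
      intro g hg
      by_contra hgm
      push_neg at hgm
      -- one of the extended semigroups avoids 0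
      have hone : (0 : FreeAbelianGroup (Fin k)) ∉ AddSubsemigroup.closure (insert g m) ∨
          (0 : FreeAbelianGroup (Fin k)) ∉ AddSubsemigroup.closure (insert (-g) m) := by
        by_contra hb
        push_neg at hb
        obtain ⟨hb1, hb2⟩ := hb
        obtain ⟨p, a, hpa, hp⟩ := form_lemma hmadd g _ hb1
        obtain ⟨q, b, hqb, hq⟩ := form_lemma hmadd (-g) _ hb2
        have hsum : b • p + a • q = 0 := by
          have h1 : b • ((0 : FreeAbelianGroup (Fin k))) = b • (p + a • g) := by rw [← hpa]
          have h2 : a • ((0 : FreeAbelianGroup (Fin k))) = a • (q + b • (-g)) := by rw [← hqb]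
          simp only [smul_zero, smul_add, smul_neg] at h1 h2
          have := congrArg₂ (· + ·) h1 h2
          simp only [add_zero] at this
          rw [smul_comm b a g] at this
          calc b • p + a • q = b • p + a • b • g + (a • q + -(a • b • g)) := by abel
            _ = 0 := this.symm
        rcases hp with hp | ⟨rfl, ha⟩
        · rcases hq with hq | ⟨rfl, hb'⟩
          · -- p, q ∈ m
            rcases Nat.eq_zero_or_pos a with rfl | ha
            · have hp0 : p = 0 := by simpa using hpa.symm
              exact hm0 (hp0 ▸ hp)
            · rcases Nat.eq_zero_or_pos b with rfl | hb'
              · have hq0 : q = 0 := by simpa using hqb.symm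
                exact hm0 (hq0 ▸ hq)
              · have h1 := nsmul_mem_set hmadd hp b hb'
                have h2 := nsmul_mem_set hmadd hq a ha
                have := hmadd _ h1 _ h2
                rw [hsum] at this
                exact hm0 this
          · -- q = 0, b ≥ 1 : b • (-g) = 0 → g = 0
            have : b • (-g) = 0 := by simpa using hqb.symm
            rcases freeAb_torsionfree b (-g) this with h | h
            · omega
            · exact hg (by simpa [neg_eq_zero] using h)
        · -- p = 0, a ≥ 1: a • g = 0 → g = 0
          have : a • g = 0 := by simpa using hpa.symm
          rcases freeAb_torsionfree a g this with h | h
          · omega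
          · exact hg h
      rcases hone with h | h
      · have hA' : (↑(AddSubsemigroup.closure (insert g m)) : Set (FreeAbelianGroup (Fin k))) ∈ 𝒮 :=
          ⟨fun x hx y hy => AddSubsemigroup.add_mem _ hx hy,
            fun x hx => AddSubsemigroup.subset_closure (Set.mem_insert_of_mem _ (hmt hx)), h⟩
        have hle : m ⊆ ↑(AddSubsemigroup.closure (insert g m)) :=
          fun x hx => AddSubsemigroup.subset_closure (Set.mem_insert_of_mem _ hx)
        have := hmax.2 hA' hle
        exact hgm.1 (this (AddSubsemigroup.subset_closure (Set.mem_insert _ _)))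
      · have hA' : (↑(AddSubsemigroup.closure (insert (-g) m)) : Set (FreeAbelianGroup (Fin k))) ∈ 𝒮 :=
          ⟨fun x hx y hy => AddSubsemigroup.add_mem _ hx hy,
            fun x hx => AddSubsemigroup.subset_closure (Set.mem_insert_of_mem _ (hmt hx)), h⟩
        have hle : m ⊆ ↑(AddSubsemigroup.closure (insert (-g) m)) :=
          fun x hx => AddSubsemigroup.subset_closure (Set.mem_insert_of_mem _ hx)
        have := hmax.2 hA' hle
        exact hgm.2 (this (AddSubsemigroup.subset_closure (Set.mem_insert _ _)))
    -- define the order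
    refine ⟨fun a b => a = b ∨ b - a ∈ m, ?_, ?_, ?_⟩
    · refine { refl := fun a => Or.inl rfl, trans := ?_, antisymm := ?_, total := ?_ }
      · intro a b c hab hbc
        rcases hab with rfl | hab
        · exact hbc
        rcases hbc with rfl | hbc
        · exact Or.inr hab
        · refine Or.inr ?_
          have := hmadd _ hbc _ hab
          simpa [sub_add_sub_cancel] using this
      · intro a b hab hba
        rcases hab with rfl | hab
        · rfl
        rcases hba with rfl | hba
        · rfl
        · exfalso
          have := hmadd _ hab _ hba
          simp only [sub_add_sub_cancel, sub_self] at this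
          exact hm0 this
      · intro a b
        by_cases hab : a = b
        · exact Or.inl (Or.inl hab)
        · rcases hkey (b - a) (sub_ne_zero.mpr (Ne.symm hab)) with h | h
          · exact Or.inl (Or.inr h)
          · exact Or.inr (Or.inr (by simpa using h))
    · intro a b c hab
      rcases hab with rfl | hab
      · exact Or.inl rfl
      · exact Or.inr (by simpa using hab)
    · intro i
      constructor
      · exact Or.inr (by simpa using hmt (Set.mem_range_self i))
      · intro hti
        exact hm0 (hti ▸ hmt (Set.mem_range_self i))
  · -- easy direction
    intro h0 hr
    obtain ⟨r, hlin, htrans, hpos⟩ := hr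
    have key : ∀ x ∈ AddSubsemigroup.closure (Set.range t), r 0 x ∧ x ≠ 0 := by
      intro x hx
      induction hx using AddSubsemigroup.closure_induction with
      | mem z hz =>
        obtain ⟨i, rfl⟩ := hz
        exact hpos i
      | add x y hx hy ihx ihy =>
        obtain ⟨hx0, hxne⟩ := ihx
        obtain ⟨hy0, hyne⟩ := ihy
        have h1 : r x (y + x) := by simpa using htrans _ _ x hy0
        haveI := hlin
        have hxy : r 0 (x + y) := Trans.trans hx0 (by simpa [add_comm] using h1)
        refine ⟨hxy, fun hxy0 => ?_⟩
        have hyx : y = -x := eq_neg_of_add_eq_zero_right hxy0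
        have h2 : r x 0 := by
          have := htrans _ _ x (hyx ▸ hy0)
          rw [zero_add, neg_add_cancel] at this
          exact this
        exact hxne (antisymm h2 hx0)
    exact (key 0 h0).2 rfl
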